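/- Let μ*(·, u) denote the student-optimal stable matching for market (N, M, u). For any student i, let μ*_i(·, u_{-i}) be the student-optimal stable matching in the market with student i removed, and let g_i(μ*_i) be the matching on N obtained by leaving i unmatched. Then μ*(·, u) = T*(g_i(μ*_i(·, u_{-i}))): re-stabilizing the SOSM of the market without i (after reintroducing i as unmatched) yields the SOSM of the full market. -/

import Mathlib

attribute [local instance] Classical.propDecidable

noncomputable section

/-- A many-to-one college admissions market (college admissions model) with `n`
students and `m` colleges.  Strict preferences are encoded by injective rank
functions (a smaller rank means more preferred); `none` is the outside option
`0` (being unmatched / an unfilled position). -/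
structure Market (n m : ℕ) where
  quota : Fin m → ℕ
  sRank : Fin n → Option (Fin m) → ℕ
  sRank_inj : ∀ i, Function.Injective (sRank i)
  cRank : Fin m → Option (Fin n) → ℕ
  cRank_inj : ∀ j, Function.Injective (cRank j)

namespace Market

variable {n m : ℕ}

/-- Student `i` strictly prefers `a` to `b`. -/
def sPref (M : Market n m) (i : Fin n) (a b : Option (Fin m)) : Prop :=
  M.sRank i a < M.sRank i b

/-- College `j` strictly prefers `a` to `b`. -/
def cPref (M : Market n m) (j : Fin m) (a b : Option (Fin n)) : Prop :=
  M.cRank j a < M.cRank j b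

/-- The set `μ⁻¹(j)` of students matched to college `j` under `μ`. -/
def assigned (M : Market n m) (μ : Fin n → Option (Fin m)) (j : Fin m) : Finset (Fin n) :=
  Finset.univ.filter fun i => μ i = some j

/-- `μ` is a (capacity-feasible) matching: `|μ⁻¹(j)| ≤ q_j` for every college. -/
def IsMatching (M : Market n m) (μ : Fin n → Option (Fin m)) : Prop :=
  ∀ j, (M.assigned μ j).card ≤ M.quota j

/-- Individual rationality of `μ`. -/
def IndRational (M : Market n m) (μ : Fin n → Option (Fin m)) : Prop :=
  (∀ i, ¬ M.sPref i none (μ i)) ∧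
  (∀ j i', μ i' = some j → ¬ M.cPref j none (some i'))

/-- `(i, j)` is a blocking pair for `μ`. -/
def Blocks (M : Market n m) (μ : Fin n → Option (Fin m)) (i : Fin n) (j : Fin m) : Prop :=
  M.sPref i (some j) (μ i) ∧
  (((M.assigned μ j).card < M.quota j ∧ M.cPref j (some i) none) ∨
   ((M.assigned μ j).card = M.quota j ∧ ∃ i' ∈ M.assigned μ j, M.cPref j (some i) (some i')))

/-- `μ` is stable: individually rational with no blocking pair. -/
def Stable (M : Market n m) (μ : Fin n → Option (Fin m)) : Prop :=
  M.IndRational μ ∧ ∀ i j, ¬ M.Blocks μ i j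

/-- `μ` is envy-free: individually rational and any blocking pair involves an
unmatched student. -/
def EnvyFree (M : Market n m) (μ : Fin n → Option (Fin m)) : Prop :=
  M.IndRational μ ∧ ∀ i j, M.Blocks μ i j → μ i = none

/-- `μ` is 1-envy-free: envy-free, and either stable or there is one and only
one student who belongs to every blocking pair. -/
def OneEnvyFree (M : Market n m) (μ : Fin n → Option (Fin m)) : Prop :=
  M.EnvyFree μ ∧ (M.Stable μ ∨ ∃! i : Fin n, ∀ i' j, M.Blocks μ i' j → i' = i)

/-- `(i, j)` is a student-maximal blocking pair: `j` is `i`'s most preferred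
college among those with whom `i` forms a blocking pair. -/
def StudentMaxBlock (M : Market n m) (μ : Fin n → Option (Fin m)) (i : Fin n) (j : Fin m) :
    Prop :=
  M.Blocks μ i j ∧ ∀ j', M.Blocks μ i j' → M.sRank i (some j) ≤ M.sRank i (some j')

/-- `T` is the re-stabilization operator: on a 1-envy-free matching with no
blocking pair it is the identity; otherwise it satisfies the unique
student-maximal blocking pair `(i, j)`, matching `i` to `j`, keeping everyone
not matched to `j` unchanged, keeping the students of `j` if `j` has a vacancy
or if they are not `j`'s worst current student, and unmatching `j`'s worst
current student otherwise. -/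
def IsTStep (M : Market n m) (T : (Fin n → Option (Fin m)) → Fin n → Option (Fin m)) : Prop :=
  ∀ μ, M.IsMatching μ → M.OneEnvyFree μ →
    ((∀ i j, ¬ M.Blocks μ i j) → T μ = μ) ∧
    ∀ i j, M.StudentMaxBlock μ i j →
      T μ i = some j ∧
      ∀ i', i' ≠ i →
        (μ i' ≠ some j → T μ i' = μ i') ∧
        (μ i' = some j →
          ((M.assigned μ j).card < M.quota j → T μ i' = μ i') ∧
          ((M.assigned μ j).card = M.quota j →
            ((∃ i'' ∈ M.assigned μ j, M.cPref j (some i') (some i'')) → T μ i' = μ i') ∧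
            ((∀ i'' ∈ M.assigned μ j, i'' ≠ i' → M.cPref j (some i'') (some i')) →
              T μ i' = none)))

/-- `Tstar` iterates `T` finitely many times from any 1-envy-free matching
until a fixed point of `T` is reached. -/
def IsTStarOf (M : Market n m) (T Tstar : (Fin n → Option (Fin m)) → Fin n → Option (Fin m)) :
    Prop :=
  ∀ μ, M.IsMatching μ → M.OneEnvyFree μ →
    ∃ r : ℕ, Tstar μ = T^[r] μ ∧ T (Tstar μ) = Tstar μ

/-- A one-step responsive improvement for college `j`: `A` is obtained from `B`
either by filling a vacancy with an acceptable student, or by swapping a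
student of `B` for a strictly preferred outside student. -/
def SwapImproves (M : Market n m) (j : Fin m) (A B : Finset (Fin n)) : Prop :=
  (∃ i₁, i₁ ∉ B ∧ A = insert i₁ B ∧ M.cPref j (some i₁) none) ∨
  (∃ i₁ i₂, i₂ ∈ B ∧ i₁ ∉ B ∧ A = insert i₁ (B.erase i₂) ∧ M.cPref j (some i₁) (some i₂))

/-- The responsive extension of college `j`'s strict preference to sets of
students: the transitive closure of one-step responsive improvements. -/
def SetPref (M : Market n m) (j : Fin m) (A B : Finset (Fin n)) : Prop :=
  Relation.TransGen (M.SwapImproves j) A B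

/-- `μ₁ ≿ μ₂`: every college either gets the same set of students or a
strictly (responsively) preferred set. -/
def CollegesWeakPref (M : Market n m) (μ₁ μ₂ : Fin n → Option (Fin m)) : Prop :=
  ∀ j, M.assigned μ₁ j = M.assigned μ₂ j ∨ M.SetPref j (M.assigned μ₁ j) (M.assigned μ₂ j)

/-- `μ` is the student-optimal stable matching: a stable matching that every
student weakly prefers to any other stable matching. -/
def IsSOSM (M : Market n m) (μ : Fin n → Option (Fin m)) : Prop :=
  M.IsMatching μ ∧ M.Stable μ ∧
    ∀ μ', M.IsMatching μ' → M.Stable μ' → ∀ i, M.sRank i (μ i) ≤ M.sRank i (μ' i)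

/-- `μ` (with student `i` unmatched) is a stable matching of the market in
which student `i` has been removed. -/
def StableAway (M : Market n m) (i : Fin n) (μ : Fin n → Option (Fin m)) : Prop :=
  μ i = none ∧
  (∀ i', i' ≠ i → ¬ M.sPref i' none (μ i')) ∧
  (∀ j i', i' ≠ i → μ i' = some j → ¬ M.cPref j none (some i')) ∧
  (∀ i' j, i' ≠ i → ¬ M.Blocks μ i' j)

/-- `μ` (with student `i` unmatched) is the student-optimal stable matching of
the market in which student `i` has been removed. -/
def IsSOSMAway (M : Market n m) (i : Fin n) (μ : Fin n → Option (Fin m)) : Prop :=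
  M.IsMatching μ ∧ M.StableAway i μ ∧
    ∀ μ', M.IsMatching μ' → M.StableAway i μ' →
      ∀ i', i' ≠ i → M.sRank i' (μ i') ≤ M.sRank i' (μ' i')

/-- The maximum rank difference `h(w)` among the colleges' preferences: the
largest rank gap `|w_j(i₁) − w_j(i₂)|` over colleges `j` and pairs `(i₁, i₂)`
on whose relative ranking at least two colleges disagree (`0` if there is no
disagreement). -/
def maxRankDiff (M : Market n m) : ℕ :=
  Finset.univ.sup fun j : Fin m =>
    (Finset.univ.filter fun q : Option (Fin n) × Option (Fin n) =>
        ∃ j₁ j₂ : Fin m, M.cPref j₁ q.1 q.2 ∧ M.cPref j₂ q.2 q.1).sup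
      fun q => ((M.cRank j q.1 : ℤ) - (M.cRank j q.2 : ℤ)).natAbs

/-- `N*_{j,1}(μ) = μ⁻¹(j) \ μ*⁻¹(j)` : students of `j` under `μ` but not `μs`. -/
def Nset1 (M : Market n m) (μ μs : Fin n → Option (Fin m)) (j : Fin m) : Finset (Fin n) :=
  M.assigned μ j \ M.assigned μs j

/-- `N*_{j,0}(μ) = μ*⁻¹(j) \ μ⁻¹(j)` : students of `j` under `μs` but not `μ`. -/
def Nset0 (M : Market n m) (μ μs : Fin n → Option (Fin m)) (j : Fin m) : Finset (Fin n) :=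
  M.assigned μs j \ M.assigned μ j

/-- The rank `r_{j,i}(A)` of student `i` within the set `A` according to `≻_j`. -/
def rankIn (M : Market n m) (j : Fin m) (i : Fin n) (A : Finset (Fin n)) : ℕ :=
  (A.filter fun i' => M.cPref j (some i') (some i)).card + 1

/-- `a ▷_j b`: student `a` displaces student `b` from college `j` (as we move
from the SOSM `μs` to the stable matching `μ`). -/
def Displaces (M : Market n m) (μ μs : Fin n → Option (Fin m)) (j : Fin m) (a b : Fin n) :
    Prop :=
  a ∈ M.Nset1 μ μs j ∧ b ∈ M.Nset0 μ μs j ∧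
    M.rankIn j a (M.Nset1 μ μs j) = M.rankIn j b (M.Nset0 μ μs j)

/-- `a ▷ b`: `a` displaces `b` from some college. -/
def DisplacesAny (M : Market n m) (μ μs : Fin n → Option (Fin m)) (a b : Fin n) : Prop :=
  ∃ j, M.Displaces μ μs j a b

/-- The positions of the related one-to-one market: college `j` is split into
`q_j` ordered positions. -/
abbrev Position (M : Market n m) : Type := (j : Fin m) × Fin (M.quota j)

/-- Student `i`'s strict preference over positions in the related one-to-one
market: positions of strictly better colleges are better, and within a college
a smaller index is better. -/
def PosBetter (M : Market n m) (i : Fin n) :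
    Option (Position M) → Option (Position M) → Prop
  | some q, some q' =>
      M.sRank i (some q.1) < M.sRank i (some q'.1) ∨ (q.1 = q'.1 ∧ (q.2 : ℕ) < (q'.2 : ℕ))
  | some q, none => M.sRank i (some q.1) < M.sRank i none
  | none, some q' => M.sRank i none < M.sRank i (some q'.1)
  | none, none => False

/-- `(μN, μM)` is the one-to-one matching of the related market corresponding
to the many-to-one matching `μ`: the students of `μ⁻¹(j)` occupy, in the order
of college `j`'s preference, the ordered positions of `j`. -/
def Corresponds (M : Market n m) (μ : Fin n → Option (Fin m))
    (μN : Fin n → Option (Position M)) (μM : Position M → Option (Fin n)) : Prop :=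
  (∀ i p, μN i = some p ↔ μM p = some i) ∧
  (∀ i j, (∃ s, μN i = some ⟨j, s⟩) ↔ μ i = some j) ∧
  (∀ i j (s : Fin (M.quota j)), μN i = some ⟨j, s⟩ →
    (s : ℕ) = ((M.assigned μ j).filter fun i' => M.cPref j (some i') (some i)).card)

/-- `(i, p)` is a blocking pair in the related one-to-one market. -/
def PosBlocks (M : Market n m) (μN : Fin n → Option (Position M))
    (μM : Position M → Option (Fin n)) (i : Fin n) (p : Position M) : Prop :=
  M.PosBetter i (some p) (μN i) ∧ M.cPref p.1 (some i) (μM p)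

/-- Individual rationality in the related one-to-one market. -/
def PosIR (M : Market n m) (μN : Fin n → Option (Position M))
    (μM : Position M → Option (Fin n)) : Prop :=
  (∀ i, ¬ M.PosBetter i none (μN i)) ∧ (∀ p : Position M, ¬ M.cPref p.1 none (μM p))

/-- Stability in the related one-to-one market. -/
def PosStable (M : Market n m) (μN : Fin n → Option (Position M))
    (μM : Position M → Option (Fin n)) : Prop :=
  M.PosIR μN μM ∧ ∀ i p, ¬ M.PosBlocks μN μM i p

/-- Simplicity in the related one-to-one market: individually rational and any
blocking pair involves an unmatched student. -/
def PosSimple (M : Market n m) (μN : Fin n → Option (Position M))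
    (μM : Position M → Option (Fin n)) : Prop :=
  M.PosIR μN μM ∧ ∀ i p, M.PosBlocks μN μM i p → μN i = none

/-- 1-simplicity in the related one-to-one market: simple, and either stable or
there is one and only one student belonging to every blocking pair. -/
def PosOneSimple (M : Market n m) (μN : Fin n → Option (Position M))
    (μM : Position M → Option (Fin n)) : Prop :=
  M.PosSimple μN μM ∧
    (M.PosStable μN μM ∨ ∃! i : Fin n, ∀ i' p, M.PosBlocks μN μM i' p → i' = i)

end Market

/-- A generic one-to-one matching market with `n` students and `p` positions,
with strict preferences encoded by injective rank functions. -/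
structure OOMarket (n p : ℕ) where
  sRank : Fin n → Option (Fin p) → ℕ
  sRank_inj : ∀ i, Function.Injective (sRank i)
  pRank : Fin p → Option (Fin n) → ℕ
  pRank_inj : ∀ c, Function.Injective (pRank c)

namespace OOMarket

variable {n p : ℕ}

/-- `(μN, μM)` is a one-to-one matching. -/
def IsOOMatching (O : OOMarket n p) (μN : Fin n → Option (Fin p))
    (μM : Fin p → Option (Fin n)) : Prop :=
  ∀ i c, μN i = some c ↔ μM c = some i

/-- `(i, c)` is a blocking pair for `(μN, μM)`. -/
def OOBlocks (O : OOMarket n p) (μN : Fin n → Option (Fin p))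
    (μM : Fin p → Option (Fin n)) (i : Fin n) (c : Fin p) : Prop :=
  O.sRank i (some c) < O.sRank i (μN i) ∧ O.pRank c (some i) < O.pRank c (μM c)

/-- Individual rationality. -/
def OOIR (O : OOMarket n p) (μN : Fin n → Option (Fin p))
    (μM : Fin p → Option (Fin n)) : Prop :=
  (∀ i, ¬ O.sRank i none < O.sRank i (μN i)) ∧ (∀ c, ¬ O.pRank c none < O.pRank c (μM c))

/-- Stability. -/
def OOStable (O : OOMarket n p) (μN : Fin n → Option (Fin p))
    (μM : Fin p → Option (Fin n)) : Prop :=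
  O.OOIR μN μM ∧ ∀ i c, ¬ O.OOBlocks μN μM i c

/-- Simplicity: individually rational and every blocking pair involves an
unmatched student. -/
def OOSimple (O : OOMarket n p) (μN : Fin n → Option (Fin p))
    (μM : Fin p → Option (Fin n)) : Prop :=
  O.OOIR μN μM ∧ ∀ i c, O.OOBlocks μN μM i c → μN i = none

/-- 1-simplicity: simple, and either stable or there is one and only one
student belonging to every blocking pair. -/
def OOOneSimple (O : OOMarket n p) (μN : Fin n → Option (Fin p))
    (μM : Fin p → Option (Fin n)) : Prop :=
  O.OOSimple μN μM ∧
    (O.OOStable μN μM ∨ ∃! i : Fin n, ∀ i' c, O.OOBlocks μN μM i' c → i' = i)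

end OOMarket

end

noncomputable section AuxProofs
namespace Market

attribute [local instance] Classical.propDecidable

variable {n m : ℕ} (M : Market n m)

lemma mem_assigned' {μ : Fin n → Option (Fin m)} {j : Fin m} {x : Fin n} :
    x ∈ M.assigned μ j ↔ μ x = some j := by
  simp [Market.assigned]

lemma sflip {i : Fin n} {a b : Option (Fin m)} (h : ¬ M.sPref i a b) (hne : b ≠ a) :
    M.sPref i b a :=
  lt_of_le_of_ne (not_lt.mp h) (fun he => hne (M.sRank_inj i he))

lemma cflip {j : Fin m} {a b : Option (Fin n)} (h : ¬ M.cPref j a b) (hne : b ≠ a) :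
    M.cPref j b a :=
  lt_of_le_of_ne (not_lt.mp h) (fun he => hne (M.cRank_inj j he))

lemma exists_mem_sdiff' {X Y : Finset (Fin n)} (h : Y.card ≤ X.card) {a : Fin n}
    (haY : a ∈ Y) (haX : a ∉ X) : ∃ b ∈ X, b ∉ Y := by
  by_contra hc
  push_neg at hc
  have hXY : X ⊆ Y.erase a := fun b hb =>
    Finset.mem_erase.mpr ⟨fun he => haX (he ▸ hb), hc b hb⟩
  have h2 := Finset.card_le_card hXY
  rw [Finset.card_erase_of_mem haY] at h2
  have h3 : 0 < Y.card := Finset.card_pos.mpr ⟨a, haY⟩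
  omega

/-- The key invariant along the re-stabilization process. -/
def Qinv (μs μ : Fin n → Option (Fin m)) : Prop :=
  ∀ i', M.sRank i' (μ i') ≤ M.sRank i' (μs i') ∨
    ∃ j', M.Blocks μ i' j' ∧ M.sRank i' (some j') ≤ M.sRank i' (μs i')

lemma join_lemma (i : Fin n) (α β : Fin n → Option (Fin m))
    (hαm : M.IsMatching α) (hα : M.StableAway i α)
    (hβm : M.IsMatching β) (hβ : M.Stable β) :
    ∃ lam, M.IsMatching lam ∧ M.StableAway i lam ∧
      ∀ i', i' ≠ i → M.sRank i' (lam i') ≤ M.sRank i' (β i') := by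
  classical
  obtain ⟨hαnone, hαsir, hαcir, hαnb⟩ := hα
  obtain ⟨⟨hβsir, hβcir⟩, hβnb⟩ := hβ
  set D : Finset (Fin n) :=
    Finset.univ.filter (fun x => x ≠ i ∧ M.sRank x (β x) < M.sRank x (α x)) with hD
  have hDmem : ∀ x, x ∈ D ↔ x ≠ i ∧ M.sRank x (β x) < M.sRank x (α x) := by
    intro x; simp [hD]
  have hDβ : ∀ x ∈ D, ∃ k, β x = some k := by
    intro x hx
    rw [hDmem] at hx
    cases hb : β x with
    | some k => exact ⟨k, rfl⟩
    | none =>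
      exfalso
      have h1 : M.sRank x (α x) ≤ M.sRank x none := not_lt.mp (hαsir x hx.1)
      rw [hb] at hx
      exact absurd (lt_of_lt_of_le hx.2 h1) (lt_irrefl _)
  have hDnotA : ∀ k x, x ∈ D → β x = some k → α x ≠ some k := by
    intro k x hx hb ha
    rw [hDmem] at hx
    rw [ha, hb] at hx
    exact lt_irrefl _ hx.2
  -- pointwise inequality: |β⁻¹(k) ∩ D| ≤ |α⁻¹(k) ∩ D|
  have hle : ∀ k, ((M.assigned β k) ∩ D).card ≤ ((M.assigned α k) ∩ D).card := by
    intro k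
    rcases Finset.eq_empty_or_nonempty ((M.assigned β k) ∩ D) with he | ⟨b, hb⟩
    · rw [he]; simp
    · obtain ⟨hbB, hbD⟩ := Finset.mem_inter.mp hb
      have hbβ : β b = some k := M.mem_assigned'.mp hbB
      have hbi : b ≠ i := ((hDmem b).mp hbD).1
      have hbnone : M.cPref k (some b) none :=
        M.cflip (hβcir k b hbβ) (fun h => nomatch h)
      have hbst : M.sPref b (some k) (α b) := by
        have := ((hDmem b).mp hbD).2
        rwa [hbβ] at this
      have hnb : ¬ M.Blocks α b k := hαnb b k hbi
      have hAq : (M.assigned α k).card = M.quota k := by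
        by_contra hc
        exact hnb ⟨hbst, Or.inl ⟨lt_of_le_of_ne (hαm k) hc, hbnone⟩⟩
      have hall : ∀ x ∈ M.assigned α k, M.cPref k (some x) (some b) := by
        intro x hx
        have hxb : x ≠ b := fun h => hDnotA k b hbD hbβ (h ▸ M.mem_assigned'.mp hx)
        refine M.cflip (fun hc => hnb ⟨hbst, Or.inr ⟨hAq, x, hx, hc⟩⟩) ?_
        exact fun h => hxb (Option.some_injective _ h)
      have hsub : M.assigned α k \ M.assigned β k ⊆ (M.assigned α k) ∩ D := by
        intro x hx
        obtain ⟨hxA, hxB⟩ := Finset.mem_sdiff.mp hx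
        have hxα : α x = some k := M.mem_assigned'.mp hxA
        have hxi : x ≠ i := fun h => by
          rw [h, hαnone] at hxα; exact nomatch hxα
        refine Finset.mem_inter.mpr ⟨hxA, (hDmem x).mpr ⟨hxi, ?_⟩⟩
        by_contra hc
        have hxβ : β x ≠ some k := fun h => hxB (M.mem_assigned'.mpr h)
        have hst : M.sPref x (some k) (β x) := by
          have h1 : M.sRank x (α x) ≤ M.sRank x (β x) := not_lt.mp hc
          rw [hxα] at h1
          exact lt_of_le_of_ne h1 (fun h => hxβ (M.sRank_inj x h).symm)
        refine hβnb x k ⟨hst, ?_⟩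
        rcases lt_or_eq_of_le (hβm k) with h | h
        · exact Or.inl ⟨h, lt_trans (hall x hxA) hbnone⟩
        · exact Or.inr ⟨h, b, hbB, hall x hxA⟩
      have h1 : (M.assigned β k) ∩ D ⊆ (M.assigned β k) \ (M.assigned α k) := by
        intro x hx
        obtain ⟨hxB, hxD⟩ := Finset.mem_inter.mp hx
        exact Finset.mem_sdiff.mpr ⟨hxB, fun hxA =>
          hDnotA k x hxD (M.mem_assigned'.mp hxB) (M.mem_assigned'.mp hxA)⟩
      have c1 := Finset.card_le_card h1
      have c2 := Finset.card_le_card hsub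
      have e1 := Finset.card_inter_add_card_sdiff (M.assigned β k) (M.assigned α k)
      have e2 := Finset.card_inter_add_card_sdiff (M.assigned α k) (M.assigned β k)
      have e3 : ((M.assigned β k) ∩ (M.assigned α k)).card =
          ((M.assigned α k) ∩ (M.assigned β k)).card := by rw [Finset.inter_comm]
      have e4 := hβm k
      omega
  -- equality via global counting
  have hkey : ∀ k, ((M.assigned β k) ∩ D).card = ((M.assigned α k) ∩ D).card := by
    have hsumβ : D.card ≤ ∑ k : Fin m, ((M.assigned β k) ∩ D).card := by
      have hsubset : D ⊆ Finset.univ.biUnion (fun k => (M.assigned β k) ∩ D) := by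
        intro x hx
        obtain ⟨k, hk⟩ := hDβ x hx
        exact Finset.mem_biUnion.mpr ⟨k, Finset.mem_univ _,
          Finset.mem_inter.mpr ⟨M.mem_assigned'.mpr hk, hx⟩⟩
      exact le_trans (Finset.card_le_card hsubset) (Finset.card_biUnion_le)
    have hsumα : (∑ k : Fin m, ((M.assigned α k) ∩ D).card) ≤ D.card := by
      have hdisj : ∀ x ∈ (Finset.univ : Finset (Fin m)), ∀ y ∈ (Finset.univ : Finset (Fin m)),
          x ≠ y → Disjoint ((M.assigned α x) ∩ D) ((M.assigned α y) ∩ D) := by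
        intro x _ y _ hxy
        rw [Finset.disjoint_left]
        intro a ha hb
        have h1 : α a = some x := M.mem_assigned'.mp (Finset.mem_inter.mp ha).1
        have h2 : α a = some y := M.mem_assigned'.mp (Finset.mem_inter.mp hb).1
        rw [h1] at h2
        exact hxy (Option.some_injective _ h2)
      rw [← Finset.card_biUnion hdisj]
      refine Finset.card_le_card ?_
      intro x hx
      obtain ⟨k, -, hk⟩ := Finset.mem_biUnion.mp hx
      exact (Finset.mem_inter.mp hk).2
    have hsum_le : (∑ k : Fin m, ((M.assigned β k) ∩ D).card) ≤
        ∑ k : Fin m, ((M.assigned α k) ∩ D).card :=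
      Finset.sum_le_sum (fun k _ => hle k)
    have heq : (∑ k : Fin m, ((M.assigned β k) ∩ D).card) =
        ∑ k : Fin m, ((M.assigned α k) ∩ D).card := by omega
    have := (Finset.sum_eq_sum_iff_of_le (fun k _ => hle k)).mp heq
    exact fun k => this k (Finset.mem_univ k)
  -- define the join
  set lam : Fin n → Option (Fin m) := fun x =>
    if x = i then none else
    if M.sRank x (α x) ≤ M.sRank x (β x) then α x else β x with hlamdef
  have hlami : lam i = none := by simp [hlamdef]
  have hlamval : ∀ x, x ≠ i → (lam x = α x ∧ M.sRank x (α x) ≤ M.sRank x (β x)) ∨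
      (lam x = β x ∧ M.sRank x (β x) < M.sRank x (α x)) := by
    intro x hx
    by_cases hc : M.sRank x (α x) ≤ M.sRank x (β x)
    · left; exact ⟨by simp [hlamdef, hx, hc], hc⟩
    · right; exact ⟨by simp [hlamdef, hx, hc], not_le.mp hc⟩
  have hmin : ∀ x, x ≠ i → M.sRank x (lam x) ≤ M.sRank x (α x) ∧
      M.sRank x (lam x) ≤ M.sRank x (β x) := by
    intro x hx
    rcases hlamval x hx with ⟨h, hc⟩ | ⟨h, hc⟩
    · rw [h]; exact ⟨le_refl _, hc⟩
    · rw [h]; exact ⟨le_of_lt hc, le_refl _⟩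
  have hlam_assigned : ∀ j, M.assigned lam j =
      ((M.assigned α j) \ D) ∪ ((M.assigned β j) ∩ D) := by
    intro j
    ext x
    rw [M.mem_assigned', Finset.mem_union, Finset.mem_sdiff, Finset.mem_inter,
      M.mem_assigned', M.mem_assigned']
    constructor
    · intro hx
      have hxi : x ≠ i := fun h => by rw [h, hlami] at hx; exact nomatch hx
      rcases hlamval x hxi with ⟨h, hc⟩ | ⟨h, hc⟩
      · rw [h] at hx
        exact Or.inl ⟨hx, fun hd => absurd ((hDmem x).mp hd).2 (not_lt.mpr hc)⟩
      · rw [h] at hx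
        exact Or.inr ⟨hx, (hDmem x).mpr ⟨hxi, hc⟩⟩
    · intro hx
      rcases hx with ⟨hxA, hxD⟩ | ⟨hxB, hxD⟩
      · have hxi : x ≠ i := fun h => by
          rw [h, hαnone] at hxA; exact nomatch hxA
        rcases hlamval x hxi with ⟨h, hc⟩ | ⟨h, hc⟩
        · rw [h]; exact hxA
        · exact absurd ((hDmem x).mpr ⟨hxi, hc⟩) hxD
      · have hxi : x ≠ i := ((hDmem x).mp hxD).1
        rcases hlamval x hxi with ⟨h, hc⟩ | ⟨h, hc⟩
        · exact absurd ((hDmem x).mp hxD).2 (not_lt.mpr hc)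
        · rw [h]; exact hxB
  have hlam_card : ∀ j, (M.assigned lam j).card = (M.assigned α j).card := by
    intro j
    rw [hlam_assigned j]
    rw [Finset.card_union_of_disjoint]
    · rw [hkey j]
      have := Finset.card_inter_add_card_sdiff (M.assigned α j) D
      omega
    · rw [Finset.disjoint_left]
      intro a ha hb
      exact (Finset.mem_sdiff.mp ha).2 (Finset.mem_inter.mp hb).2
  have hlamm : M.IsMatching lam := fun j => by rw [hlam_card j]; exact hαm j
  refine ⟨lam, hlamm, ⟨hlami, ?_, ?_, ?_⟩, fun x hx => (hmin x hx).2⟩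
  · intro x hx
    rcases hlamval x hx with ⟨h, -⟩ | ⟨h, -⟩
    · rw [h]; exact hαsir x hx
    · rw [h]; exact hβsir x
  · intro j x hx hxj
    rcases hlamval x hx with ⟨h, -⟩ | ⟨h, -⟩
    · rw [h] at hxj; exact hαcir j x hx hxj
    · rw [h] at hxj; exact hβcir j x hxj
  · intro x j hxi hblk
    have hsx : M.sRank x (some j) < M.sRank x (lam x) := hblk.1
    have hsxα : M.sPref x (some j) (α x) := lt_of_lt_of_le hsx (hmin x hxi).1
    have hsxβ : M.sPref x (some j) (β x) := lt_of_lt_of_le hsx (hmin x hxi).2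
    rcases hblk.2 with ⟨hlt, hacc⟩ | ⟨hcard, y, hy, hxy⟩
    · rw [hlam_card j] at hlt
      exact hαnb x j hxi ⟨hsxα, Or.inl ⟨hlt, hacc⟩⟩
    · rw [hlam_assigned j] at hy
      rcases Finset.mem_union.mp hy with hyA | hyB
      · have hyA' := (Finset.mem_sdiff.mp hyA).1
        have hyα : α y = some j := M.mem_assigned'.mp hyA'
        have hyi : y ≠ i := fun h => by
          rw [h, hαnone] at hyα; exact nomatch hyα
        have hynone : M.cPref j (some y) none :=
          M.cflip (hαcir j y hyi hyα) (fun h => nomatch h)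
        refine hαnb x j hxi ⟨hsxα, ?_⟩
        rcases lt_or_eq_of_le (hαm j) with h | h
        · exact Or.inl ⟨h, lt_trans hxy hynone⟩
        · exact Or.inr ⟨h, y, hyA', hxy⟩
      · have hyB' := (Finset.mem_inter.mp hyB).1
        have hyβ : β y = some j := M.mem_assigned'.mp hyB'
        have hynone : M.cPref j (some y) none :=
          M.cflip (hβcir j y hyβ) (fun h => nomatch h)
        refine hβnb x j ⟨hsxβ, ?_⟩
        rcases lt_or_eq_of_le (hβm j) with h | h
        · exact Or.inl ⟨h, lt_trans hxy hynone⟩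
        · exact Or.inr ⟨h, y, hyB', hxy⟩


lemma cs_lemma (i : Fin n) (μi μs : Fin n → Option (Fin m))
    (hi : M.IsSOSMAway i μi) (hs : M.IsSOSM μs) :
    ∀ i', i' ≠ i → M.sRank i' (μi i') ≤ M.sRank i' (μs i') := by
  obtain ⟨lam, h1, h2, h3⟩ := M.join_lemma i μi μs hi.1 hi.2.1 hs.1 hs.2.1
  exact fun i' hi' => le_trans (hi.2.2 lam h1 h2 i' hi') (h3 i' hi')

lemma away_matching (i : Fin n) (μi : Fin n → Option (Fin m)) (hi : M.IsSOSMAway i μi) :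
    M.IsMatching μi := hi.1

lemma away_oef (i : Fin n) (μi : Fin n → Option (Fin m)) (hi : M.IsSOSMAway i μi) :
    M.OneEnvyFree μi := by
  obtain ⟨hm, ⟨hnone, hsir, hcir, hnb⟩, -⟩ := hi
  have hir : M.IndRational μi := by
    constructor
    · intro x
      by_cases hx : x = i
      · subst hx; rw [hnone]; exact lt_irrefl _
      · exact hsir x hx
    · intro j x hx
      have hxi : x ≠ i := fun h => by rw [h, hnone] at hx; exact nomatch hx
      exact hcir j x hxi hx
  refine ⟨⟨hir, ?_⟩, ?_⟩
  · intro x j hblk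
    by_cases hx : x = i
    · subst hx; exact hnone
    · exact absurd hblk (hnb x j hx)
  · by_cases hb : ∃ x j, M.Blocks μi x j
    · right
      obtain ⟨x, j, hxj⟩ := hb
      have hxi : x = i := by
        by_contra hne
        exact hnb x j hne hxj
      refine ⟨i, fun a b hab => ?_, fun y hy => ?_⟩
      · by_contra hne
        exact hnb a b hne hab
      · have h1 : x = y := hy x j hxj
        rw [h1] at hxi; exact hxi.symm ▸ rfl
    · left
      push_neg at hb
      exact ⟨hir, hb⟩

lemma init_Q (i : Fin n) (μi μs : Fin n → Option (Fin m))
    (hi : M.IsSOSMAway i μi) (hs : M.IsSOSM μs) : M.Qinv μs μi := by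
  have hcs := M.cs_lemma i μi μs hi hs
  intro x
  by_cases hx : x = i
  · subst hx
    cases hμs : μs x with
    | none =>
      left; rw [hi.2.1.1]
    | some jstar =>
      by_cases hblk : M.Blocks μi x jstar
      · right; exact ⟨jstar, hblk, le_refl _⟩
      · exfalso
        have hst : M.sPref x (some jstar) (μi x) := by
          rw [hi.2.1.1]
          have h0 := hs.2.1.1.1 x
          rw [hμs] at h0
          exact M.sflip h0 (fun h => nomatch h)
        have hacc : M.cPref jstar (some x) none :=
          M.cflip (hs.2.1.1.2 jstar x hμs) (fun h => nomatch h)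
        by_cases hA : (M.assigned μi jstar).card < M.quota jstar
        · exact hblk ⟨hst, Or.inl ⟨hA, hacc⟩⟩
        · have hAq : (M.assigned μi jstar).card = M.quota jstar :=
            le_antisymm (hi.1 jstar) (not_lt.mp hA)
          have hall : ∀ y ∈ M.assigned μi jstar, M.cPref jstar (some y) (some x) := by
            intro y hy
            have hne : y ≠ x := fun h => by
              rw [h, M.mem_assigned', hi.2.1.1] at hy; exact nomatch hy
            refine M.cflip (fun hc => hblk ⟨hst, Or.inr ⟨hAq, y, hy, hc⟩⟩) ?_
            exact fun h => hne (Option.some_injective _ h)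
          have hiS : x ∈ M.assigned μs jstar := M.mem_assigned'.mpr hμs
          have hiA : x ∉ M.assigned μi jstar := by
            rw [M.mem_assigned', hi.2.1.1]; exact fun h => nomatch h
          have hcard : (M.assigned μs jstar).card ≤ (M.assigned μi jstar).card := by
            rw [hAq]; exact hs.1 jstar
          obtain ⟨i2, hi2A, hi2S⟩ := exists_mem_sdiff' hcard hiS hiA
          have hi2i : i2 ≠ x := fun h => hiA (h ▸ hi2A)
          have hi2m : μi i2 = some jstar := M.mem_assigned'.mp hi2A
          have hi2s : μs i2 ≠ some jstar := fun h => hi2S (M.mem_assigned'.mpr h)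
          have hlt : M.sPref i2 (some jstar) (μs i2) := by
            have := hcs i2 hi2i
            rw [hi2m] at this
            exact lt_of_le_of_ne this (fun h => hi2s (M.sRank_inj i2 h).symm)
          refine hs.2.1.2 i2 jstar ⟨hlt, ?_⟩
          rcases lt_or_eq_of_le (hs.1 jstar) with h | h
          · exact Or.inl ⟨h, lt_trans (hall i2 hi2A) hacc⟩
          · exact Or.inr ⟨h, x, hiS, hall i2 hi2A⟩
  · left; exact hcs x hx

lemma step_lemma (T : (Fin n → Option (Fin m)) → Fin n → Option (Fin m))
    (hT : M.IsTStep T) (μs : Fin n → Option (Fin m)) (hs : M.IsSOSM μs)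
    (μ : Fin n → Option (Fin m)) (h1 : M.IsMatching μ) (h2 : M.OneEnvyFree μ)
    (h3 : M.Qinv μs μ) :
    M.IsMatching (T μ) ∧ M.OneEnvyFree (T μ) ∧ M.Qinv μs (T μ) := by
  classical
  by_cases hstab : ∀ a b, ¬ M.Blocks μ a b
  · rw [(hT μ h1 h2).1 hstab]; exact ⟨h1, h2, h3⟩
  push_neg at hstab
  obtain ⟨a0, b0, hab0⟩ := hstab
  rcases h2.2 with hst | ⟨i0, hi0, -⟩
  · exact absurd hab0 (hst.2 a0 b0)
  have hab0' : M.Blocks μ i0 b0 := by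
    have h := hi0 a0 b0 hab0; rwa [h] at hab0
  have hi0un : μ i0 = none := h2.1.2 i0 b0 hab0'
  obtain ⟨j0, hj0mem, hj0min⟩ := Finset.exists_min_image
    (Finset.univ.filter fun j => M.Blocks μ i0 j) (fun j => M.sRank i0 (some j))
    ⟨b0, Finset.mem_filter.mpr ⟨Finset.mem_univ _, hab0'⟩⟩
  have hj0blk : M.Blocks μ i0 j0 := (Finset.mem_filter.mp hj0mem).2
  have hmin : ∀ j', M.Blocks μ i0 j' → M.sRank i0 (some j0) ≤ M.sRank i0 (some j') :=
    fun j' hj' => hj0min j' (Finset.mem_filter.mpr ⟨Finset.mem_univ _, hj'⟩)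
  have hsmb : M.StudentMaxBlock μ i0 j0 := ⟨hj0blk, hmin⟩
  obtain ⟨hT0, hTrest⟩ := (hT μ h1 h2).2 i0 j0 hsmb
  have hi0A : i0 ∉ M.assigned μ j0 := by
    rw [M.mem_assigned', hi0un]; exact fun h => nomatch h
  have key0 : M.sRank i0 (some j0) ≤ M.sRank i0 (μs i0) := by
    rcases h3 i0 with h | ⟨j', hj', hle⟩
    · exact le_trans (le_of_lt hj0blk.1) h
    · exact le_trans (hmin j' hj') hle
  have hQother : ∀ x, x ≠ i0 → M.sRank x (μ x) ≤ M.sRank x (μs x) := by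
    intro x hx
    rcases h3 x with h | ⟨j', hj', -⟩
    · exact h
    · exact absurd (hi0 x j' hj') hx
  have hsj0' : M.sRank i0 (some j0) < M.sRank i0 none := by
    have h := hj0blk.1; rwa [hi0un] at h
  rcases lt_or_eq_of_le (h1 j0) with hlt | heq
  · -- VACANCY CASE
    have hTeq : ∀ x, x ≠ i0 → T μ x = μ x := by
      intro x hx
      by_cases hxj : μ x = some j0
      · exact ((hTrest x hx).2 hxj).1 hlt
      · exact (hTrest x hx).1 hxj
    have hacc0 : M.cPref j0 (some i0) none := by
      rcases hj0blk.2 with ⟨-, h⟩ | ⟨hc, -⟩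
      · exact h
      · exact absurd hc (ne_of_lt hlt)
    have hassign : ∀ j, j ≠ j0 → M.assigned (T μ) j = M.assigned μ j := by
      intro j hj; ext x; rw [M.mem_assigned', M.mem_assigned']
      by_cases hx : x = i0
      · subst hx; rw [hT0, hi0un]
        exact ⟨fun h => absurd (Option.some_injective _ h).symm hj,
          fun h => nomatch h⟩
      · rw [hTeq x hx]
    have hassign0 : M.assigned (T μ) j0 = insert i0 (M.assigned μ j0) := by
      ext x
      rw [M.mem_assigned', Finset.mem_insert, M.mem_assigned']
      by_cases hx : x = i0
      · subst hx; rw [hT0]; simp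
      · rw [hTeq x hx]
        exact ⟨fun h => Or.inr h, fun h => h.elim (fun hh => absurd hh hx) id⟩
    have hmatch : M.IsMatching (T μ) := by
      intro j
      by_cases hj : j = j0
      · subst hj
        rw [hassign0, Finset.card_insert_of_notMem hi0A]
        omega
      · rw [hassign j hj]; exact h1 j
    have hirs : ∀ x, ¬ M.sPref x none (T μ x) := by
      intro x
      by_cases hx : x = i0
      · subst hx; rw [hT0]; exact fun h => lt_asymm h hsj0'
      · rw [hTeq x hx]; exact h2.1.1.1 x
    have hirc : ∀ j x, T μ x = some j → ¬ M.cPref j none (some x) := by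
      intro j x hxj
      by_cases hx : x = i0
      · subst hx; rw [hT0] at hxj
        obtain rfl : j0 = j := Option.some_injective _ hxj
        exact fun h => lt_asymm h hacc0
      · rw [hTeq x hx] at hxj; exact h2.1.1.2 j x hxj
    have hnoblk : ∀ a b, ¬ M.Blocks (T μ) a b := by
      intro a b hblk
      by_cases ha : a = i0
      · replace hblk : M.Blocks (T μ) i0 b := ha ▸ hblk
        have h1b : M.sRank i0 (some b) < M.sRank i0 (some j0) := by
          have h := hblk.1; rwa [hT0] at h
        have hbj0 : b ≠ j0 := fun h => by rw [h] at h1b; exact lt_irrefl _ h1b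
        have h2b := hblk.2
        rw [hassign b hbj0] at h2b
        have hblkμ : M.Blocks μ i0 b :=
          ⟨by rw [hi0un]; exact lt_trans h1b hsj0', h2b⟩
        exact absurd (hmin b hblkμ) (not_le.mpr h1b)
      · have hTa : T μ a = μ a := hTeq a ha
        have hsa' := hblk.1
        rw [hTa] at hsa'
        by_cases hb : b = j0
        · rw [hb] at hsa'
          have h2b := hblk.2
          rw [hb, hassign0] at h2b
          rcases h2b with ⟨-, hacc⟩ | ⟨-, x, hx, haxw⟩
          · exact ha (hi0 a j0 ⟨hsa', Or.inl ⟨hlt, hacc⟩⟩)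
          · rcases Finset.mem_insert.mp hx with rfl | hxA
            · exact ha (hi0 a j0 ⟨hsa', Or.inl ⟨hlt, lt_trans haxw hacc0⟩⟩)
            · have hxnone : M.cPref j0 (some x) none :=
                M.cflip (h2.1.1.2 j0 x (M.mem_assigned'.mp hxA))
                  (fun h => nomatch h)
              exact ha (hi0 a j0 ⟨hsa', Or.inl ⟨hlt, lt_trans haxw hxnone⟩⟩)
        · have h2b := hblk.2
          rw [hassign b hb] at h2b
          exact ha (hi0 a b ⟨hsa', h2b⟩)
    have hir : M.IndRational (T μ) := ⟨hirs, hirc⟩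
    refine ⟨hmatch, ⟨⟨hir, fun x j h => absurd h (hnoblk x j)⟩, Or.inl ⟨hir, hnoblk⟩⟩, ?_⟩
    intro x
    by_cases hx : x = i0
    · subst hx; left; rw [hT0]; exact key0
    · left; rw [hTeq x hx]; exact hQother x hx
  · -- FULL CASE
    obtain ⟨x0, hx0A, hx0p⟩ : ∃ x ∈ M.assigned μ j0, M.cPref j0 (some i0) (some x) := by
      rcases hj0blk.2 with ⟨hc, -⟩ | ⟨-, x, hx, hp⟩
      · rw [heq] at hc; exact absurd hc (lt_irrefl _)
      · exact ⟨x, hx, hp⟩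
    obtain ⟨i1, hi1A, hi1max⟩ := Finset.exists_max_image (M.assigned μ j0)
      (fun x => M.cRank j0 (some x)) ⟨x0, hx0A⟩
    have hi1μ : μ i1 = some j0 := M.mem_assigned'.mp hi1A
    have hworst : ∀ x ∈ M.assigned μ j0, x ≠ i1 → M.cPref j0 (some x) (some i1) := by
      intro x hx hne
      exact lt_of_le_of_ne (hi1max x hx)
        (fun h => hne (Option.some_injective _ (M.cRank_inj j0 h)))
    have hi0i1 : M.cPref j0 (some i0) (some i1) := lt_of_lt_of_le hx0p (hi1max x0 hx0A)
    have hi10 : i1 ≠ i0 := fun h => hi0A (h ▸ hi1A)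
    have hT1 : T μ i1 = none :=
      ((((hTrest i1 hi10).2 hi1μ).2 heq).2) hworst
    have hTeq : ∀ x, x ≠ i0 → x ≠ i1 → T μ x = μ x := by
      intro x hx0 hx1
      by_cases hxj : μ x = some j0
      · exact (((hTrest x hx0).2 hxj).2 heq).1
          ⟨i1, hi1A, hworst x (M.mem_assigned'.mpr hxj) hx1⟩
      · exact (hTrest x hx0).1 hxj
    have hassign : ∀ j, j ≠ j0 → M.assigned (T μ) j = M.assigned μ j := by
      intro j hj; ext x; rw [M.mem_assigned', M.mem_assigned']
      by_cases hx0 : x = i0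
      · subst hx0; rw [hT0, hi0un]
        exact ⟨fun h => absurd (Option.some_injective _ h).symm hj,
          fun h => nomatch h⟩
      · by_cases hx1 : x = i1
        · subst hx1; rw [hT1, hi1μ]
          exact ⟨fun h => (nomatch h),
            fun h => absurd (Option.some_injective _ h).symm hj⟩
        · rw [hTeq x hx0 hx1]
    have hassign0 : M.assigned (T μ) j0 = insert i0 ((M.assigned μ j0).erase i1) := by
      ext x
      rw [M.mem_assigned', Finset.mem_insert, Finset.mem_erase, M.mem_assigned']
      by_cases hx0 : x = i0
      · subst hx0; rw [hT0]; simp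
      · by_cases hx1 : x = i1
        · subst hx1; rw [hT1]
          constructor
          · exact fun h => nomatch h
          · rintro (h | ⟨h, -⟩)
            · exact absurd h.symm hi10.symm
            · exact absurd rfl h
        · rw [hTeq x hx0 hx1]
          exact ⟨fun h => Or.inr ⟨hx1, h⟩, fun h => h.elim (fun hh => absurd hh hx0) And.right⟩
    have hApos : 0 < (M.assigned μ j0).card := Finset.card_pos.mpr ⟨i1, hi1A⟩
    have hi0erase : i0 ∉ (M.assigned μ j0).erase i1 :=
      fun h => hi0A (Finset.mem_erase.mp h).2
    have hcard0 : (M.assigned (T μ) j0).card = M.quota j0 := by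
      rw [hassign0, Finset.card_insert_of_notMem hi0erase,
        Finset.card_erase_of_mem hi1A]
      omega
    have hmatch : M.IsMatching (T μ) := by
      intro j
      by_cases hj : j = j0
      · subst hj; rw [hcard0]
      · rw [hassign j hj]; exact h1 j
    have hi1acc : M.cPref j0 (some i1) none :=
      M.cflip (h2.1.1.2 j0 i1 hi1μ) (fun h => nomatch h)
    have hi0acc : M.cPref j0 (some i0) none := lt_trans hi0i1 hi1acc
    have hirs : ∀ x, ¬ M.sPref x none (T μ x) := by
      intro x
      by_cases hx0 : x = i0
      · subst hx0; rw [hT0]; exact fun h => lt_asymm h hsj0'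
      · by_cases hx1 : x = i1
        · subst hx1; rw [hT1]; exact lt_irrefl _
        · rw [hTeq x hx0 hx1]; exact h2.1.1.1 x
    have hirc : ∀ j x, T μ x = some j → ¬ M.cPref j none (some x) := by
      intro j x hxj
      by_cases hx0 : x = i0
      · subst hx0; rw [hT0] at hxj
        obtain rfl : j0 = j := Option.some_injective _ hxj
        exact fun h => lt_asymm h hi0acc
      · by_cases hx1 : x = i1
        · subst hx1; rw [hT1] at hxj; exact absurd hxj (fun h => nomatch h)
        · rw [hTeq x hx0 hx1] at hxj; exact h2.1.1.2 j x hxj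
    have hblk1 : ∀ a b, M.Blocks (T μ) a b → a = i1 := by
      intro a b hblk
      by_cases ha0 : a = i0
      · exfalso
        replace hblk : M.Blocks (T μ) i0 b := ha0 ▸ hblk
        have h1b : M.sRank i0 (some b) < M.sRank i0 (some j0) := by
          have h := hblk.1; rwa [hT0] at h
        have hbj0 : b ≠ j0 := fun h => by rw [h] at h1b; exact lt_irrefl _ h1b
        have h2b := hblk.2
        rw [hassign b hbj0] at h2b
        have hblkμ : M.Blocks μ i0 b :=
          ⟨by rw [hi0un]; exact lt_trans h1b hsj0', h2b⟩
        exact absurd (hmin b hblkμ) (not_le.mpr h1b)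
      · by_cases ha1 : a = i1
        · exact ha1
        · exfalso
          have hTa : T μ a = μ a := hTeq a ha0 ha1
          have hsa' := hblk.1
          rw [hTa] at hsa'
          by_cases hb : b = j0
          · rw [hb] at hsa'
            have h2b := hblk.2
            rw [hb, hcard0] at h2b
            rcases h2b with ⟨hlt', -⟩ | ⟨-, x, hx, haxw⟩
            · exact absurd hlt' (lt_irrefl _)
            · rw [hassign0] at hx
              rcases Finset.mem_insert.mp hx with rfl | hxA
              · exact ha0 (hi0 a j0 ⟨hsa', Or.inr ⟨heq, i1, hi1A, lt_trans haxw hi0i1⟩⟩)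
              · exact ha0 (hi0 a j0
                  ⟨hsa', Or.inr ⟨heq, x, (Finset.mem_erase.mp hxA).2, haxw⟩⟩)
          · have h2b := hblk.2
            rw [hassign b hb] at h2b
            exact ha0 (hi0 a b ⟨hsa', h2b⟩)
    have hir : M.IndRational (T μ) := ⟨hirs, hirc⟩
    have hoef : M.OneEnvyFree (T μ) := by
      refine ⟨⟨hir, fun x j h => by rw [hblk1 x j h]; exact hT1⟩, ?_⟩
      by_cases hex : ∃ a b, M.Blocks (T μ) a b
      · right
        obtain ⟨a, b, hab⟩ := hex
        refine ⟨i1, fun x j h => hblk1 x j h, fun y hy => ?_⟩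
        have e1 := hy a b hab
        have e2 := hblk1 a b hab
        rw [e1] at e2; exact e2
      · left
        push_neg at hex
        exact ⟨hir, hex⟩
    refine ⟨hmatch, hoef, ?_⟩
    intro x
    by_cases hx0 : x = i0
    · subst hx0; left; rw [hT0]; exact key0
    · by_cases hx1 : x = i1
      · rw [hx1]
        have hQ1 : M.sRank i1 (some j0) ≤ M.sRank i1 (μs i1) := by
          have h := hQother i1 hi10
          rwa [hi1μ] at h
        cases hμs1 : μs i1 with
        | none => left; rw [hT1]
        | some j2 =>
          have hj2 : j2 ≠ j0 := by
            intro hj2e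
            subst hj2e
            have hi1S : i1 ∈ M.assigned μs j2 := M.mem_assigned'.mpr hμs1
            have hi1T : i1 ∉ M.assigned (T μ) j2 := by
              rw [M.mem_assigned', hT1]; exact fun h => nomatch h
            have hcle : (M.assigned μs j2).card ≤ (M.assigned (T μ) j2).card := by
              rw [hcard0]; exact hs.1 j2
            obtain ⟨i2, hi2T, hi2S⟩ := exists_mem_sdiff' hcle hi1S hi1T
            have hi2T' := hi2T
            rw [hassign0] at hi2T'
            have hi2w : M.cPref j2 (some i2) (some i1) := by
              rcases Finset.mem_insert.mp hi2T' with rfl | h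
              · exact hi0i1
              · exact hworst i2 (Finset.mem_erase.mp h).2 (Finset.mem_erase.mp h).1
            have hi2r : M.sRank i2 (some j2) ≤ M.sRank i2 (μs i2) := by
              rcases Finset.mem_insert.mp hi2T' with rfl | h
              · exact key0
              · have hmem := (Finset.mem_erase.mp h).2
                have hh := hQother i2 (fun hh => hi0A (hh ▸ hmem))
                rwa [M.mem_assigned'.mp hmem] at hh
            have hi2ne : μs i2 ≠ some j2 := fun h => hi2S (M.mem_assigned'.mpr h)
            have hi2lt : M.sPref i2 (some j2) (μs i2) :=
              lt_of_le_of_ne hi2r (fun h => hi2ne (M.sRank_inj i2 h).symm)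
            refine hs.2.1.2 i2 j2 ⟨hi2lt, ?_⟩
            rcases lt_or_eq_of_le (hs.1 j2) with h | h
            · exact Or.inl ⟨h, lt_trans hi2w hi1acc⟩
            · exact Or.inr ⟨h, i1, hi1S, hi2w⟩
          right
          refine ⟨j2, ⟨?_, ?_⟩, le_refl _⟩
          · rw [hT1]
            have h0 := hs.2.1.1.1 i1
            rw [hμs1] at h0
            exact M.sflip h0 (fun h => nomatch h)
          · have hC : M.assigned (T μ) j2 = M.assigned μ j2 := hassign j2 hj2
            have hi1acc2 : M.cPref j2 (some i1) none :=
              M.cflip (hs.2.1.1.2 j2 i1 hμs1) (fun h => nomatch h)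
            rcases lt_or_eq_of_le (h1 j2) with h | h
            · exact Or.inl ⟨by rw [hC]; exact h, hi1acc2⟩
            · refine Or.inr ⟨by rw [hC]; exact h, ?_⟩
              rw [hC]
              by_contra hno
              push_neg at hno
              have hall : ∀ x ∈ M.assigned μ j2, M.cPref j2 (some x) (some i1) := by
                intro x hx
                have hxne : x ≠ i1 := by
                  intro hh
                  have hm := M.mem_assigned'.mp hx
                  rw [hh, hi1μ] at hm
                  exact hj2 (Option.some_injective _ hm).symm
                exact M.cflip (hno x hx) (fun hh => hxne (Option.some_injective _ hh))
              have hi1S2 : i1 ∈ M.assigned μs j2 := M.mem_assigned'.mpr hμs1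
              have hi1C : i1 ∉ M.assigned μ j2 := by
                rw [M.mem_assigned', hi1μ]
                exact fun hh => hj2 (Option.some_injective _ hh).symm
              have hcle2 : (M.assigned μs j2).card ≤ (M.assigned μ j2).card := by
                rw [h]; exact hs.1 j2
              obtain ⟨i3, hi3C, hi3S⟩ := exists_mem_sdiff' hcle2 hi1S2 hi1C
              have hi3μ : μ i3 = some j2 := M.mem_assigned'.mp hi3C
              have hi30 : i3 ≠ i0 := fun hh => by
                rw [hh, hi0un] at hi3μ; exact nomatch hi3μ
              have hi3r : M.sRank i3 (some j2) ≤ M.sRank i3 (μs i3) := by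
                have hh := hQother i3 hi30; rwa [hi3μ] at hh
              have hi3ne : μs i3 ≠ some j2 := fun hh => hi3S (M.mem_assigned'.mpr hh)
              have hi3lt : M.sPref i3 (some j2) (μs i3) :=
                lt_of_le_of_ne hi3r (fun hh => hi3ne (M.sRank_inj i3 hh).symm)
              refine hs.2.1.2 i3 j2 ⟨hi3lt, ?_⟩
              rcases lt_or_eq_of_le (hs.1 j2) with hh | hh
              · exact Or.inl ⟨hh, lt_trans (hall i3 hi3C) hi1acc2⟩
              · exact Or.inr ⟨hh, i1, hi1S2, hall i3 hi3C⟩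
      · left; rw [hTeq x hx0 hx1]; exact hQother x hx0


end Market
end AuxProofs

/-- re-stabilizing the SOSM of the market without student `i`
(after reintroducing `i` as unmatched) yields the SOSM of the full market:
`μ*(·, u) = T*(g_i(μ*_i(·, u_{-i})))`. -/
theorem sosm_eq_restabilized_sosm_away {n m : ℕ} (M : Market n m)
    (T Tstar : (Fin n → Option (Fin m)) → Fin n → Option (Fin m))
    (hT : M.IsTStep T) (hTs : M.IsTStarOf T Tstar)
    (i : Fin n) (μi μs : Fin n → Option (Fin m))
    (hi : M.IsSOSMAway i μi) (hs : M.IsSOSM μs) :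
    μs = Tstar μi := by
  classical
  have h1i : M.IsMatching μi := hi.1
  have h2i : M.OneEnvyFree μi := M.away_oef i μi hi
  have h3i : M.Qinv μs μi := M.init_Q i μi μs hi hs
  obtain ⟨r, hr, hfix⟩ := hTs μi h1i h2i
  have hP : ∀ k : ℕ, M.IsMatching (T^[k] μi) ∧ M.OneEnvyFree (T^[k] μi) ∧
      M.Qinv μs (T^[k] μi) := by
    intro k
    induction k with
    | zero => exact ⟨h1i, h2i, h3i⟩
    | succ k ih =>
      rw [Function.iterate_succ_apply']
      exact M.step_lemma T hT μs hs _ ih.1 ih.2.1 ih.2.2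
  have hPr := hP r
  rw [← hr] at hPr
  obtain ⟨hmν, hoefν, hQν⟩ := hPr
  set ν := Tstar μi with hν
  -- ν is stable
  have hstab : ∀ a b, ¬ M.Blocks ν a b := by
    by_contra hc
    push_neg at hc
    obtain ⟨a, b, hab⟩ := hc
    -- get the unique blocker
    have hnotstable : ¬ M.Stable ν := fun h => h.2 a b hab
    rcases hoefν.2 with h | ⟨i0, hi0, -⟩
    · exact hnotstable h
    · have ha : a = i0 := hi0 a b hab
      subst ha
      -- student-max block exists
      have hSne : (Finset.univ.filter fun j => M.Blocks ν a j).Nonempty :=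
        ⟨b, Finset.mem_filter.mpr ⟨Finset.mem_univ _, hab⟩⟩
      obtain ⟨j0, hj0mem, hj0min⟩ :=
        Finset.exists_min_image _ (fun j => M.sRank a (some j)) hSne
      have hj0blk : M.Blocks ν a j0 := (Finset.mem_filter.mp hj0mem).2
      have hsmb : M.StudentMaxBlock ν a j0 :=
        ⟨hj0blk, fun j' hj' => hj0min j' (Finset.mem_filter.mpr ⟨Finset.mem_univ _, hj'⟩)⟩
      have hspec := ((hT ν hmν hoefν).2 a j0 hsmb).1
      rw [hfix] at hspec
      -- but blocking means ν a ≠ some j0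
      have : M.sRank a (some j0) < M.sRank a (ν a) := hj0blk.1
      rw [hspec] at this
      exact lt_irrefl _ this
  have hir : M.IndRational ν := hoefν.1.1
  have hstable : M.Stable ν := ⟨hir, hstab⟩
  funext i'
  have hle1 : M.sRank i' (ν i') ≤ M.sRank i' (μs i') := by
    rcases hQν i' with h | ⟨j', hj', -⟩
    · exact h
    · exact absurd hj' (hstab i' j')
  have hle2 : M.sRank i' (μs i') ≤ M.sRank i' (ν i') := hs.2.2 ν hmν hstable i'
  exact M.sRank_inj i' (le_antisymm hle2 hle1)
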